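/- For any f, g ∈ S_n and any 1 ≤ k ≤ n, d_K(f,g) ≥ d_K(f|^{[k]}, g|^{[k]}) + Σ_{i=k+1}^{n} |Φ(f)_i − Φ(g)_i|. -/

import Mathlib

open Finset

/-- Kendall's tau distance: minimal number of adjacent transpositions
(in one-line notation, i.e. swaps of values in consecutive positions)
transforming `f` into `g`. -/
noncomputable def kendall {n : ℕ} (f g : Equiv.Perm (Fin n)) : ℕ :=
  sInf {m | ∃ l : List (Equiv.Perm (Fin n)), l.length = m ∧
    (∀ s ∈ l, ∃ i j : Fin n, (i : ℕ) + 1 = (j : ℕ) ∧ s = Equiv.swap i j) ∧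
    g = f * l.prod}

/-- The factoradic representation (0-indexed): `phi f i` counts values smaller
than `i` that appear to the right of `i` in the one-line notation of `f`. -/
noncomputable def phi {n : ℕ} (f : Equiv.Perm (Fin n)) (i : Fin n) : ℕ :=
  Set.ncard {j : Fin n | j < i ∧ f⁻¹ i < f⁻¹ j}

/-- `projUp hk f` is `f|^{[k]}`: keep only the values `0,…,k-1` of `f` and
relabel them to `Fin k`, preserving relative order of positions. -/
noncomputable def projUp {n k : ℕ} (hk : k ≤ n) (f : Equiv.Perm (Fin n)) :
    Equiv.Perm (Fin k) := by
  classical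
  let g : Fin k → Fin n := fun b => f⁻¹ (Fin.castLE hk b)
  have hg : Function.Injective g :=
    fun a b hab => Fin.castLE_injective hk (f⁻¹.injective hab)
  let s : Finset (Fin n) := Finset.univ.image g
  have hs : s.card = k := by
    rw [Finset.card_image_of_injective _ hg, Finset.card_univ, Fintype.card_fin]
  have hr : Set.range g = ↑s := by ext x; simp [s, g]
  exact ((Equiv.ofInjective g hg).trans
    ((Equiv.setCongr hr).trans (s.orderIsoOfFin hs).toEquiv.symm)).symm

/-- `projDown hk g` is `g|_{[k]}`: keep only the first `k` coordinates of `g`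
and relabel the values to `Fin k`, preserving relative order. -/
noncomputable def projDown {n k : ℕ} (hk : k ≤ n) (g : Equiv.Perm (Fin n)) :
    Equiv.Perm (Fin k) :=
  (projUp hk g⁻¹)⁻¹

/-- The ℓ∞ distance between permutations. -/
def dinf {n : ℕ} (f g : Equiv.Perm (Fin n)) : ℕ :=
  Finset.univ.sup (fun i : Fin n => ((f i : ℤ) - (g i : ℤ)).natAbs)

open Equiv Equiv.Perm

variable {n k : ℕ}

/-- adjacency predicate matching the one in `kendall`. -/
def IsAdjSwap {m : ℕ} (s : Equiv.Perm (Fin m)) : Prop :=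
  ∃ i j : Fin m, (i : ℕ) + 1 = (j : ℕ) ∧ s = Equiv.swap i j

lemma exists_adj_list {m : ℕ} (f g : Equiv.Perm (Fin m)) :
    ∃ l : List (Equiv.Perm (Fin m)), (∀ s ∈ l, IsAdjSwap s) ∧ g = f * l.prod := by
  cases m with
  | zero => exact ⟨[], by simp, Subsingleton.elim _ _⟩
  | succ m =>
    have h : (f⁻¹ * g) ∈ Submonoid.closure
        (Set.range fun i : Fin m ↦ Equiv.swap i.castSucc i.succ) := by
      rw [Equiv.Perm.mclosure_swap_castSucc_succ]; trivial
    obtain ⟨l, hl, hprod⟩ := Submonoid.exists_list_of_mem_closure h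
    refine ⟨l, fun s hs => ?_, by rw [hprod]; group⟩
    obtain ⟨i, rfl⟩ := hl s hs
    exact ⟨i.castSucc, i.succ, by simp, rfl⟩

lemma kendall_le_of_list {m : ℕ} (f g : Equiv.Perm (Fin m))
    (l : List (Equiv.Perm (Fin m))) (hl : ∀ s ∈ l, IsAdjSwap s) (hg : g = f * l.prod) :
    kendall f g ≤ l.length :=
  Nat.sInf_le ⟨l, rfl, hl, hg⟩

lemma kendall_spec {m : ℕ} (f g : Equiv.Perm (Fin m)) :
    ∃ l : List (Equiv.Perm (Fin m)), l.length = kendall f g ∧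
      (∀ s ∈ l, IsAdjSwap s) ∧ g = f * l.prod := by
  have hne : {m' | ∃ l : List (Equiv.Perm (Fin m)), l.length = m' ∧
      (∀ s ∈ l, ∃ i j : Fin m, (i : ℕ) + 1 = (j : ℕ) ∧ s = Equiv.swap i j) ∧
      g = f * l.prod}.Nonempty := by
    obtain ⟨l, hl, hg⟩ := exists_adj_list f g
    exact ⟨l.length, l, rfl, hl, hg⟩
  exact Nat.sInf_mem hne

lemma kendall_refl {m : ℕ} (f : Equiv.Perm (Fin m)) : kendall f f = 0 :=
  Nat.le_zero.mp (kendall_le_of_list f f [] (by simp) (by simp))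

lemma kendall_triangle {m : ℕ} (a b c : Equiv.Perm (Fin m)) :
    kendall a c ≤ kendall a b + kendall b c := by
  obtain ⟨l₁, h₁, ha₁, hb₁⟩ := kendall_spec a b
  obtain ⟨l₂, h₂, ha₂, hb₂⟩ := kendall_spec b c
  calc kendall a c ≤ (l₁ ++ l₂).length :=
        kendall_le_of_list a c _ (fun s hs => by
          rcases List.mem_append.mp hs with h | h
          exacts [ha₁ s h, ha₂ s h])
        (by rw [List.prod_append, ← mul_assoc, ← hb₁, ← hb₂])
    _ = kendall a b + kendall b c := by simp [h₁, h₂]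

/-- a swap of two adjacent elements preserves strict order except on the pair itself. -/
lemma swap_lt_iff {i j x y : Fin n} (hij : (i : ℕ) + 1 = (j : ℕ))
    (h1 : ¬(x = i ∧ y = j)) (h2 : ¬(x = j ∧ y = i)) :
    (Equiv.swap i j x < Equiv.swap i j y ↔ x < y) := by
  rw [Equiv.swap_apply_def, Equiv.swap_apply_def]
  simp only [Fin.ext_iff, not_and] at h1 h2
  split_ifs <;> simp only [Fin.lt_def, Fin.ext_iff] at * <;> omega

/-- characterization of `projUp` through order of preimages. -/
lemma projUp_inv_lt_iff (hk : k ≤ n) (f : Equiv.Perm (Fin n)) (b b' : Fin k) :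
    (projUp hk f)⁻¹ b < (projUp hk f)⁻¹ b' ↔
      f⁻¹ (Fin.castLE hk b) < f⁻¹ (Fin.castLE hk b') := by
  simp only [projUp, Equiv.Perm.inv_def, Equiv.symm_symm, Equiv.trans_apply]
  have key : ∀ (s : Finset (Fin n)) (hs : s.card = k) (x y : s),
      ((s.orderIsoOfFin hs).toEquiv.symm x < (s.orderIsoOfFin hs).toEquiv.symm y ↔ (x : Fin n) < (y : Fin n)) := by
    intro s hs x y
    show (s.orderIsoOfFin hs).symm x < (s.orderIsoOfFin hs).symm y ↔ _
    rw [OrderIso.lt_iff_lt, Subtype.coe_lt_coe]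
  refine (key _ _ _ _).trans ?_
  exact Iff.rfl

lemma perm_eq_of_inv_lt_iff {σ τ : Equiv.Perm (Fin k)}
    (h : ∀ b b', σ⁻¹ b < σ⁻¹ b' ↔ τ⁻¹ b < τ⁻¹ b') : σ = τ := by
  have hmono : StrictMono (fun x => τ⁻¹ (σ x)) := by
    intro x y hxy
    exact (h (σ x) (σ y)).mp (by simpa using hxy)
  have h1 : Set.range (fun x => τ⁻¹ (σ x)) = Set.range (id : Fin k → Fin k) := by
    rw [Set.range_id, Set.range_eq_univ]
    exact (Equiv.surjective _).comp (Equiv.surjective _)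
  haveI : WellFoundedLT (Fin k) := inferInstance
  have hid : (fun x => τ⁻¹ (σ x)) = id := (hmono.range_inj strictMono_id).mp h1
  refine Equiv.ext fun x => ?_
  have h2 := congrFun hid x
  simp only [id] at h2
  calc σ x = τ (τ⁻¹ (σ x)) := (Equiv.apply_symm_apply τ _).symm
    _ = τ x := by rw [h2]

theorem Equiv.Perm.inv_apply_self {α : Type*} (f : Equiv.Perm α) (x : α) : f⁻¹ (f x) = x :=
  f.symm_apply_apply x

lemma mul_swap_inv_apply (h : Equiv.Perm (Fin n)) (i j v : Fin n) :
    (h * Equiv.swap i j)⁻¹ v = Equiv.swap i j (h⁻¹ v) := by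
  rw [mul_inv_rev, Equiv.Perm.mul_apply, Equiv.swap_inv]

lemma phi_mul_swap_of_ne (h : Equiv.Perm (Fin n)) {i j : Fin n} (hij : (i : ℕ) + 1 = (j : ℕ))
    {v : Fin n} (hv : v ≠ max (h i) (h j)) :
    phi (h * Equiv.swap i j) v = phi h v := by
  unfold phi
  congr 1
  ext x
  simp only [Set.mem_setOf_eq, mul_swap_inv_apply]
  refine and_congr_right fun hx => swap_lt_iff hij ?_ ?_
  · rintro ⟨h1, h2⟩
    apply hv
    have hv' : v = h i := by rw [← h1]; simp
    have hx' : x = h j := by rw [← h2]; simp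
    rw [hv', hx'] at hx
    rw [hv']
    exact (max_eq_left hx.le).symm
  · rintro ⟨h1, h2⟩
    apply hv
    have hv' : v = h j := by rw [← h1]; simp
    have hx' : x = h i := by rw [← h2]; simp
    rw [hv', hx'] at hx
    rw [hv']
    exact (max_eq_right hx.le).symm

lemma phi_abs_mul_swap (h : Equiv.Perm (Fin n)) {i j : Fin n} (hij : (i : ℕ) + 1 = (j : ℕ))
    (v : Fin n) :
    ((phi h v : ℤ) - phi (h * Equiv.swap i j) v).natAbs
      ≤ if v = max (h i) (h j) then 1 else 0 := by
  by_cases hv : v = max (h i) (h j)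
  · subst hv
    have hij' : i < j := by rw [Fin.lt_def]; omega
    have hne : h i ≠ h j := fun e => by
      have := congrArg Fin.val (h.injective e); omega
    rcases hne.lt_or_gt with hab | hab
    · -- h i < h j, max = h j, new set = insert (h i) old
      have hmax : max (h i) (h j) = h j := max_eq_right hab.le
      rw [hmax]
      have hset : {x : Fin n | x < h j ∧ (h * Equiv.swap i j)⁻¹ (h j) < (h * Equiv.swap i j)⁻¹ x}
          = insert (h i) {x : Fin n | x < h j ∧ h⁻¹ (h j) < h⁻¹ x} := by
        ext x
        simp only [Set.mem_setOf_eq, Set.mem_insert_iff, mul_swap_inv_apply,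
          Equiv.Perm.inv_apply_self, Equiv.swap_apply_right]
        rcases eq_or_ne x (h i) with rfl | hxi
        · simp only [Equiv.Perm.inv_apply_self, Equiv.swap_apply_left]
          exact ⟨fun _ => Or.inl trivial, fun _ => ⟨hab, hij'⟩⟩
        rcases eq_or_ne x (h j) with rfl | hxj
        · exact ⟨fun hc => absurd hc.1 (lt_irrefl _), fun hc => by
            rcases hc with hc | hc
            exacts [absurd hc hxi, absurd hc.1 (lt_irrefl _)]⟩
        · have h1 : h⁻¹ x ≠ i := fun e => hxi (by rw [← e]; simp)
          have h2 : h⁻¹ x ≠ j := fun e => hxj (by rw [← e]; simp)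
          rw [Equiv.swap_apply_of_ne_of_ne h1 h2]
          have hiff : i < h⁻¹ x ↔ j < h⁻¹ x := by
            have h1' : (h⁻¹ x : ℕ) ≠ i := fun e => h1 (Fin.ext e)
            have h2' : (h⁻¹ x : ℕ) ≠ j := fun e => h2 (Fin.ext e)
            rw [Fin.lt_def, Fin.lt_def]
            omega
          rw [hiff]
          tauto
      have hmem : h i ∉ {x : Fin n | x < h j ∧ h⁻¹ (h j) < h⁻¹ x} := by
        simp only [Set.mem_setOf_eq, Equiv.Perm.inv_apply_self, not_and]
        intro _
        rw [Fin.lt_def]; omega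
      unfold phi
      rw [hset, Set.ncard_insert_of_notMem hmem (Set.toFinite _)]
      rw [if_pos rfl]
      omega
    · -- h j < h i, max = h i, new set = old \ {h j}
      have hmax : max (h i) (h j) = h i := max_eq_left hab.le
      rw [hmax]
      have hset : {x : Fin n | x < h i ∧ (h * Equiv.swap i j)⁻¹ (h i) < (h * Equiv.swap i j)⁻¹ x}
          = {x : Fin n | x < h i ∧ h⁻¹ (h i) < h⁻¹ x} \ {h j} := by
        ext x
        simp only [Set.mem_setOf_eq, Set.mem_diff, Set.mem_singleton_iff, mul_swap_inv_apply,
          Equiv.Perm.inv_apply_self, Equiv.swap_apply_left]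
        rcases eq_or_ne x (h j) with rfl | hxj
        · simp only [Equiv.Perm.inv_apply_self, Equiv.swap_apply_right]
          constructor
          · rintro ⟨-, hc⟩
            exact absurd hc (by rw [Fin.lt_def]; omega)
          · rintro ⟨-, hc⟩
            exact absurd trivial hc
        rcases eq_or_ne x (h i) with rfl | hxi
        · exact ⟨fun hc => absurd hc.1 (lt_irrefl _), fun hc => absurd hc.1.1 (lt_irrefl _)⟩
        · have h1 : h⁻¹ x ≠ i := fun e => hxi (by rw [← e]; simp)
          have h2 : h⁻¹ x ≠ j := fun e => hxj (by rw [← e]; simp)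
          rw [Equiv.swap_apply_of_ne_of_ne h1 h2]
          have hiff : j < h⁻¹ x ↔ i < h⁻¹ x := by
            have h1' : (h⁻¹ x : ℕ) ≠ i := fun e => h1 (Fin.ext e)
            have h2' : (h⁻¹ x : ℕ) ≠ j := fun e => h2 (Fin.ext e)
            rw [Fin.lt_def, Fin.lt_def]
            omega
          rw [hiff]
          tauto
      have hmem : h j ∈ {x : Fin n | x < h i ∧ h⁻¹ (h i) < h⁻¹ x} := by
        simp only [Set.mem_setOf_eq, Equiv.Perm.inv_apply_self]
        exact ⟨hab, hij'⟩
      have hpos : 1 ≤ {x : Fin n | x < h i ∧ h⁻¹ (h i) < h⁻¹ x}.ncard :=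
        (Set.ncard_pos (Set.toFinite _)).mpr ⟨h j, hmem⟩
      unfold phi
      rw [hset, Set.ncard_diff_singleton_of_mem hmem]
      rw [if_pos rfl]
      omega
  · rw [phi_mul_swap_of_ne h hij hv]
    simp [hv]

lemma projUp_mul_swap_of_ge (hk : k ≤ n) (h : Equiv.Perm (Fin n)) {i j : Fin n}
    (hij : (i : ℕ) + 1 = (j : ℕ)) (hab : k ≤ ((h i : Fin n) : ℕ) ∨ k ≤ ((h j : Fin n) : ℕ)) :
    projUp hk (h * Equiv.swap i j) = projUp hk h := by
  apply perm_eq_of_inv_lt_iff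
  intro b b'
  rw [projUp_inv_lt_iff, projUp_inv_lt_iff, mul_swap_inv_apply, mul_swap_inv_apply]
  refine swap_lt_iff hij ?_ ?_
  · rintro ⟨h1, h2⟩
    have e1 : Fin.castLE hk b = h i := by rw [← h1]; simp
    have e2 : Fin.castLE hk b' = h j := by rw [← h2]; simp
    have c1 : ((h i : Fin n) : ℕ) < k := by rw [← e1]; exact b.isLt
    have c2 : ((h j : Fin n) : ℕ) < k := by rw [← e2]; exact b'.isLt
    omega
  · rintro ⟨h1, h2⟩
    have e1 : Fin.castLE hk b = h j := by rw [← h1]; simp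
    have e2 : Fin.castLE hk b' = h i := by rw [← h2]; simp
    have c1 : ((h j : Fin n) : ℕ) < k := by rw [← e1]; exact b.isLt
    have c2 : ((h i : Fin n) : ℕ) < k := by rw [← e2]; exact b'.isLt
    omega

lemma projUp_mul_swap_of_lt (hk : k ≤ n) (h : Equiv.Perm (Fin n)) {i j : Fin n}
    (hij : (i : ℕ) + 1 = (j : ℕ)) (ha : ((h i : Fin n) : ℕ) < k) (hb : ((h j : Fin n) : ℕ) < k) :
    ∃ r r' : Fin k, (r : ℕ) + 1 = (r' : ℕ) ∧
      projUp hk (h * Equiv.swap i j) = projUp hk h * Equiv.swap r r' := by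
  set A : Fin k := ⟨(h i : Fin n), ha⟩ with hA
  set B : Fin k := ⟨(h j : Fin n), hb⟩ with hB
  have hcA : Fin.castLE hk A = h i := Fin.ext rfl
  have hcB : Fin.castLE hk B = h j := Fin.ext rfl
  set r : Fin k := (projUp hk h)⁻¹ A with hr
  set r' : Fin k := (projUp hk h)⁻¹ B with hr'
  have hiA : h⁻¹ (Fin.castLE hk A) = i := by rw [hcA]; simp
  have hjB : h⁻¹ (Fin.castLE hk B) = j := by rw [hcB]; simp
  have hrr' : r < r' := by
    rw [hr, hr', projUp_inv_lt_iff, hiA, hjB, Fin.lt_def]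
    omega
  have hadj : (r : ℕ) + 1 = (r' : ℕ) := by
    by_contra hne
    have h1 : (r : ℕ) + 1 < (r' : ℕ) := by
      rw [Fin.lt_def] at hrr'; omega
    set t : Fin k := ⟨(r : ℕ) + 1, lt_trans h1 r'.isLt⟩ with ht
    have ht1 : r < t := by rw [Fin.lt_def]; simp [ht]
    have ht2 : t < r' := by rw [Fin.lt_def]; exact h1
    have e : (projUp hk h)⁻¹ (projUp hk h t) = t := by simp
    have c1 := (projUp_inv_lt_iff hk h A (projUp hk h t)).mp (by rw [e]; exact ht1)
    have c2 := (projUp_inv_lt_iff hk h (projUp hk h t) B).mp (by rw [e]; exact ht2)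
    rw [hiA] at c1
    rw [hjB] at c2
    rw [Fin.lt_def] at c1 c2
    omega
  refine ⟨r, r', hadj, ?_⟩
  apply perm_eq_of_inv_lt_iff
  intro b b'
  rw [projUp_inv_lt_iff, mul_swap_inv_apply, mul_swap_inv_apply,
    mul_swap_inv_apply, mul_swap_inv_apply]
  have L : ∀ c : Fin k, Equiv.swap i j (h⁻¹ (Fin.castLE hk c))
      = h⁻¹ (Equiv.swap (h i) (h j) (Fin.castLE hk c)) := by
    intro c
    have := Function.Injective.swap_apply (Equiv.injective (h⁻¹ : Equiv.Perm (Fin n)))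
      (h i) (h j) (Fin.castLE hk c)
    simpa using this
  have R : ∀ c : Fin k, Equiv.swap r r' ((projUp hk h)⁻¹ c)
      = (projUp hk h)⁻¹ (Equiv.swap A B c) := by
    intro c
    have := Function.Injective.swap_apply
      (Equiv.injective ((projUp hk h)⁻¹ : Equiv.Perm (Fin k))) A B c
    simpa [← hr, ← hr'] using this
  have C : ∀ c : Fin k, Fin.castLE hk (Equiv.swap A B c)
      = Equiv.swap (h i) (h j) (Fin.castLE hk c) := by
    intro c
    have := Function.Injective.swap_apply (Fin.castLE_injective hk) A B c
    rw [← this, hcA, hcB]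
  rw [L b, L b', R b, R b', ← C b, ← C b']
  exact (projUp_inv_lt_iff hk h _ _).symm

lemma step_le_one (hk : k ≤ n) (h s : Equiv.Perm (Fin n)) (hs : IsAdjSwap s) :
    kendall (projUp hk h) (projUp hk (h * s)) +
      ∑ v ∈ Finset.univ.filter (fun v : Fin n => k ≤ (v : ℕ)),
        ((phi h v : ℤ) - phi (h * s) v).natAbs ≤ 1 := by
  obtain ⟨i, j, hij, rfl⟩ := hs
  by_cases hc : ((h i : Fin n) : ℕ) < k ∧ ((h j : Fin n) : ℕ) < k
  · have hsum : ∀ v ∈ Finset.univ.filter (fun v : Fin n => k ≤ (v : ℕ)),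
        ((phi h v : ℤ) - phi (h * Equiv.swap i j) v).natAbs = 0 := by
      intro v hv
      simp only [Finset.mem_filter] at hv
      have hvne : v ≠ max (h i) (h j) := by
        intro e
        rcases max_cases (h i) (h j) with ⟨e1, -⟩ | ⟨e1, -⟩ <;>
          · rw [e1] at e
            have := congrArg Fin.val e
            omega
      rw [phi_mul_swap_of_ne h hij hvne]
      simp
    rw [Finset.sum_eq_zero hsum, add_zero]
    obtain ⟨r, r', hadj, heq⟩ := projUp_mul_swap_of_lt hk h hij hc.1 hc.2
    rw [heq]
    have := kendall_le_of_list (projUp hk h) (projUp hk h * Equiv.swap r r')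
      [Equiv.swap r r'] (by
        intro t ht
        simp only [List.mem_singleton] at ht
        exact ⟨r, r', hadj, ht⟩) (by simp)
    simpa using this
  · have hor : k ≤ ((h i : Fin n) : ℕ) ∨ k ≤ ((h j : Fin n) : ℕ) := by omega
    rw [projUp_mul_swap_of_ge hk h hij hor, kendall_refl, zero_add]
    calc ∑ v ∈ Finset.univ.filter (fun v : Fin n => k ≤ (v : ℕ)),
          ((phi h v : ℤ) - phi (h * Equiv.swap i j) v).natAbs
        ≤ ∑ v ∈ Finset.univ.filter (fun v : Fin n => k ≤ (v : ℕ)),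
          (if v = max (h i) (h j) then 1 else 0) :=
        Finset.sum_le_sum fun v _ => phi_abs_mul_swap h hij v
      _ ≤ 1 := by
        rw [Finset.sum_ite_eq' (Finset.univ.filter (fun v : Fin n => k ≤ (v : ℕ)))
          (max (h i) (h j)) (fun _ => 1)]
        split_ifs <;> simp

lemma D_main (hk : k ≤ n) (f : Equiv.Perm (Fin n)) (l : List (Equiv.Perm (Fin n)))
    (hl : ∀ s ∈ l, IsAdjSwap s) :
    kendall (projUp hk f) (projUp hk (f * l.prod)) +
      ∑ v ∈ Finset.univ.filter (fun v : Fin n => k ≤ (v : ℕ)),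
        ((phi f v : ℤ) - phi (f * l.prod) v).natAbs ≤ l.length := by
  induction l using List.reverseRecOn with
  | nil => simp [kendall_refl]
  | append_singleton l s ih =>
    have hl' : ∀ t ∈ l, IsAdjSwap t := fun t ht => hl t (by simp [ht])
    have hs : IsAdjSwap s := hl s (by simp)
    have ih' := ih hl'
    have hstep := step_le_one hk (f * l.prod) s hs
    have htri := kendall_triangle (projUp hk f) (projUp hk (f * l.prod))
      (projUp hk (f * l.prod * s))
    have hsum : ∑ v ∈ Finset.univ.filter (fun v : Fin n => k ≤ (v : ℕ)),
          ((phi f v : ℤ) - phi (f * l.prod * s) v).natAbs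
        ≤ (∑ v ∈ Finset.univ.filter (fun v : Fin n => k ≤ (v : ℕ)),
            ((phi f v : ℤ) - phi (f * l.prod) v).natAbs)
          + ∑ v ∈ Finset.univ.filter (fun v : Fin n => k ≤ (v : ℕ)),
            ((phi (f * l.prod) v : ℤ) - phi (f * l.prod * s) v).natAbs := by
      rw [← Finset.sum_add_distrib]
      refine Finset.sum_le_sum fun v _ => ?_
      omega
    rw [List.prod_append, List.prod_singleton, ← mul_assoc]
    have hlen : (l ++ [s]).length = l.length + 1 := by simp
    rw [hlen]
    omega

/-- `d_K(f,g) ≥ d_K(f|^{[k]},g|^{[k]}) + Σ_{i>k} |Φ(f)_i − Φ(g)_i|`. -/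
theorem stmt1 (n k : ℕ) (hk1 : 1 ≤ k) (hk : k ≤ n) (f g : Equiv.Perm (Fin n)) :
    kendall (projUp hk f) (projUp hk g) +
      ∑ i ∈ Finset.univ.filter (fun i : Fin n => k ≤ (i : ℕ)), ((phi f i : ℤ) - (phi g i : ℤ)).natAbs
      ≤ kendall f g := by
  obtain ⟨l, hlen, hadj, hg⟩ := kendall_spec f g
  rw [← hlen, hg]
  exact D_main hk f l hadj
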